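/- Let p be an odd prime, ℓ ≥ 1, and E = {(t + pn, t + pm) : 0 ≤ t < p, 0 ≤ n, m < p^{ℓ−1}} ⊆ (Z/p^ℓZ)^2. Then |E| = p^{2ℓ−1}, and for all x, y ∈ E, the quantity x·y^⊥ = x_1 y_2 − x_2 y_1 is divisible by p (i.e., is a non-unit in Z/p^ℓZ). -/
import Mathlib


/-- Sharpness example over `ℤ/p^ℓℤ`: the set
`E = {(t + pn, t + pm) : 0 ≤ t < p, 0 ≤ n, m < p^{ℓ-1}}` has `|E| = p^{2ℓ-1}` and every
`x · y^⊥ = x₁y₂ - x₂y₁` with `x, y ∈ E` is divisible by `p` (hence a non-unit). -/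
theorem sharpness_example_zmod (p ℓ : ℕ) (hp : p.Prime) (hodd : Odd p) (hℓ : 1 ≤ ℓ)
    (E : Set (Fin 2 → ZMod (p ^ ℓ)))
    (hE : E = {v | ∃ t n m : ℕ, t < p ∧ n < p ^ (ℓ - 1) ∧ m < p ^ (ℓ - 1) ∧
      v 0 = (t : ZMod (p ^ ℓ)) + p * n ∧ v 1 = (t : ZMod (p ^ ℓ)) + p * m}) :
    Nat.card E = p ^ (2 * ℓ - 1) ∧
      ∀ x ∈ E, ∀ y ∈ E, (p : ZMod (p ^ ℓ)) ∣ (x 0 * y 1 - x 1 * y 0) := by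
  subst hE
  haveI : NeZero (p ^ ℓ) := ⟨pow_ne_zero _ hp.pos.ne'⟩
  obtain ⟨k, rfl⟩ : ∃ k, ℓ = k + 1 := ⟨ℓ - 1, (Nat.succ_pred_eq_of_pos hℓ).symm⟩
  simp only [Nat.add_sub_cancel] at *
  constructor
  · set g : Fin p × Fin (p ^ k) × Fin (p ^ k) → (Fin 2 → ZMod (p ^ (k + 1))) :=
      fun a => ![(a.1 : ZMod (p ^ (k + 1))) + p * a.2.1,
                 (a.1 : ZMod (p ^ (k + 1))) + p * a.2.2] with hgdef
    have hlt : ∀ t n : ℕ, t < p → n < p ^ k → t + p * n < p ^ (k + 1) := by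
      intro t n ht hn
      have h1 : t + p * n < p * (n + 1) := by rw [Nat.mul_add, Nat.mul_one]; omega
      have h2 : p * (n + 1) ≤ p * p ^ k := Nat.mul_le_mul_left p hn
      calc t + p * n < p * (n + 1) := h1
        _ ≤ p * p ^ k := h2
        _ = p ^ (k + 1) := (pow_succ' p k).symm
    have hcast : ∀ a b : ℕ, a < p ^ (k + 1) → b < p ^ (k + 1) →
        ((a : ZMod (p ^ (k + 1))) = (b : ZMod (p ^ (k + 1)))) → a = b := by
      intro a b ha hb h
      have := congrArg ZMod.val h
      rwa [ZMod.val_cast_of_lt ha, ZMod.val_cast_of_lt hb] at this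
    have key : ∀ t n t' n' : ℕ, t < p → n < p ^ k → t' < p → n' < p ^ k →
        ((t : ZMod (p ^ (k + 1))) + p * n = (t' : ZMod (p ^ (k + 1))) + p * n') →
        t = t' ∧ n = n' := by
      intro t n t' n' ht hn ht' hn' h
      have h' : ((t + p * n : ℕ) : ZMod (p ^ (k + 1))) = ((t' + p * n' : ℕ) : ZMod (p ^ (k + 1))) := by
        push_cast; exact h
      have hnat := hcast _ _ (hlt t n ht hn) (hlt t' n' ht' hn') h'
      have hmod := congrArg (· % p) hnat
      simp only [Nat.add_mul_mod_self_left] at hmod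
      rw [Nat.mod_eq_of_lt ht, Nat.mod_eq_of_lt ht'] at hmod
      refine ⟨hmod, ?_⟩
      have : p * n = p * n' := by omega
      exact Nat.eq_of_mul_eq_mul_left hp.pos this
    have hg : Function.Injective g := by
      rintro ⟨⟨t, ht⟩, ⟨n, hn⟩, ⟨m, hm⟩⟩ ⟨⟨t', ht'⟩, ⟨n', hn'⟩, ⟨m', hm'⟩⟩ h
      have h0 := congrFun h 0
      have h1 := congrFun h 1
      simp only [hgdef, Matrix.cons_val_zero, Matrix.cons_val_one, Matrix.head_cons] at h0 h1
      obtain ⟨e1, e2⟩ := key t n t' n' ht hn ht' hn' h0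
      obtain ⟨_, e3⟩ := key t m t' m' ht hm ht' hm' h1
      simp only [Prod.mk.injEq, Fin.mk.injEq]
      exact ⟨e1, e2, e3⟩
    have hrange : {v : Fin 2 → ZMod (p ^ (k + 1)) | ∃ t n m : ℕ, t < p ∧ n < p ^ k ∧ m < p ^ k ∧
        v 0 = (t : ZMod (p ^ (k + 1))) + p * n ∧ v 1 = (t : ZMod (p ^ (k + 1))) + p * m}
        = Set.range g := by
      ext v
      constructor
      · rintro ⟨t, n, m, ht, hn, hm, h0, h1⟩
        refine ⟨⟨⟨t, ht⟩, ⟨n, hn⟩, ⟨m, hm⟩⟩, ?_⟩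
        funext i
        fin_cases i <;> simp [hgdef, h0, h1]
      · rintro ⟨⟨⟨t, ht⟩, ⟨n, hn⟩, ⟨m, hm⟩⟩, rfl⟩
        exact ⟨t, n, m, ht, hn, hm, by simp [hgdef], by simp [hgdef]⟩
    rw [hrange, Nat.card_range_of_injective hg]
    simp only [Nat.card_eq_fintype_card, Fintype.card_prod, Fintype.card_fin]
    have : 2 * (k + 1) - 1 = 2 * k + 1 := by omega
    rw [this]
    rw [pow_succ', two_mul, pow_add]
  · rintro x ⟨t, n, m, ht, hn, hm, hx0, hx1⟩ y ⟨s, n', m', hs, hn', hm', hy0, hy1⟩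
    rw [hx0, hx1, hy0, hy1]
    exact ⟨(t : ZMod (p ^ (k + 1))) * m' + n * s + p * (n * m')
      - t * n' - m * s - p * (m * n'), by ring⟩
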